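/- Let v be a non-vanishing Llull matrix with CLC structure on (S, ξ). Define X = {x ∈ S : v_{p'p} > 0 for all p <_ξ x} if some v_{p'p} > 0, and X = {a} (the ξ-minimum) otherwise. Then: (i) v_{yx} = 0 whenever x ∈ X and y ∉ X; (ii) v_{xy} > 0 whenever x ∈ X and y ≠ x. In particular X is the top dominant irreducible component of v. -/

import Mathlib

/-- The minimum score along a path `x, z₁, …, zₖ, y` (the list gives the
intermediate points; the empty list is the direct link from `x` to `y`). -/
def chainMin {S : Type*} (v : S → S → ℝ) : S → List S → S → ℝ
  | x, [], y => v x y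
  | x, z :: l, y => min (v x z) (chainMin v z l y)

/-- Indirect (max-min) score: supremum over all paths from `x` to `y`
of the minimum direct score along the path. -/
noncomputable def iScore {S : Type*} (v : S → S → ℝ) (x y : S) : ℝ :=
  sSup {r : ℝ | ∃ l : List S, r = chainMin v x l y}

/-- A Llull matrix: preference scores in `[0,1]` with `v x y + v y x ≤ 1`. -/
def IsLlull {S : Type*} (v : S → S → ℝ) : Prop :=
  ∀ x y : S, x ≠ y → 0 ≤ v x y ∧ v x y ≤ 1 ∧ v x y + v y x ≤ 1


/-- CLC structure with respect to the linear order on `S` (the admissible order ξ):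
(1) `v x y ≥ v y x` for `x < y`; (2) `v x z = max (v x y) (v y z)` and
(3) `v z x = min (v z y) (v y x)` for `x < y < z`; (4) `0 ≤ t x z − t x' z ≤ m x x'`
for `z ∉ {x, x'}` where `x'` is the immediate successor (`x ⋖ x'`),
`t x y = v x y + v y x` and `m x y = v x y − v y x`. -/
def CLC {S : Type*} [LinearOrder S] (v : S → S → ℝ) : Prop :=
  (∀ x y : S, x < y → v y x ≤ v x y) ∧
  (∀ x y z : S, x < y → y < z → v x z = max (v x y) (v y z)) ∧
  (∀ x y z : S, x < y → y < z → v z x = min (v z y) (v y x)) ∧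
  (∀ x x' z : S, x ⋖ x' → z ≠ x → z ≠ x' →
    0 ≤ (v x z + v z x) - (v x' z + v z x') ∧
    (v x z + v z x) - (v x' z + v z x') ≤ v x x' - v x' x)

/-- The candidate top dominant component: the set of `x` such that `v p' p > 0`
for every `p` below `x` (where `p'` is the immediate successor of `p`).
When some `v p' p > 0` fails for all covering pairs this set reduces to the
ξ-minimum, in accordance with the definition in the paper. -/
def clcTop {S : Type*} [LinearOrder S] (v : S → S → ℝ) : Set S :=
  {x | ∀ p p' : S, p < x → p ⋖ p' → 0 < v p' p}

section Helpers

variable {S : Type*} [LinearOrder S] [Fintype S] {v : S → S → ℝ}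

lemma llull_nonneg (hv : IsLlull v) {x y : S} (h : x ≠ y) : 0 ≤ v x y := (hv x y h).1

/-- A zero covering pair propagates upwards. -/
lemma clc_zero_up (hv : IsLlull v) (hclc : CLC v) {q q' q'' : S}
    (h1 : q ⋖ q') (h2 : q' ⋖ q'') (hz1 : v q q' = 0) (hz2 : v q' q = 0) :
    v q' q'' = 0 ∧ v q'' q' = 0 := by
  obtain ⟨hle, hmax, hmin, ht⟩ := hclc
  have hqq' : q < q' := h1.lt
  have hq'q'' : q' < q'' := h2.lt
  have hqq'' : q < q'' := hqq'.trans hq'q''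
  have hvq''q : v q'' q = 0 := by
    rw [hmin q q' q'' hqq' hq'q'', hz2]
    exact min_eq_right (llull_nonneg hv hq'q''.ne')
  have hvqq'' : v q q'' = v q' q'' := by
    rw [hmax q q' q'' hqq' hq'q'', hz1]
    exact max_eq_right (llull_nonneg hv hq'q''.ne)
  have hkey := (ht q' q'' q h2 hqq'.ne hqq''.ne).1
  rw [hz2, hz1, hvq''q, hvqq''] at hkey
  have hfz : v q' q'' = 0 := le_antisymm (by linarith) (llull_nonneg hv hq'q''.ne)
  exact ⟨hfz, le_antisymm ((hle q' q'' hq'q'').trans hfz.le)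
    (llull_nonneg hv hq'q''.ne')⟩

/-- A zero covering pair kills the backward score down to any lower point. -/
lemma clc_zero_down (hv : IsLlull v) (hclc : CLC v) {p q q' : S}
    (hpq : p < q) (h1 : q ⋖ q') (hz1 : v q q' = 0) (hz2 : v q' q = 0) :
    v q p = 0 := by
  obtain ⟨hle, hmax, hmin, ht⟩ := hclc
  have hqq' : q < q' := h1.lt
  have hpq' : p < q' := hpq.trans hqq'
  have hvq'p : v q' p = 0 := by
    rw [hmin p q q' hpq hqq', hz2]
    exact min_eq_left (llull_nonneg hv hpq.ne')
  have hvpq' : v p q' = v p q := by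
    rw [hmax p q q' hpq hqq', hz1]
    exact max_eq_left (llull_nonneg hv hpq.ne)
  have hkey := (ht q q' p h1 hpq.ne hpq'.ne).2
  rw [hz1, hz2, hvq'p, hvpq'] at hkey
  exact le_antisymm (by linarith) (llull_nonneg hv hpq.ne')

/-- Backward scores into a member of `clcTop` from below are positive. -/
lemma clc_top_back_pos (hv : IsLlull v) (hclc : CLC v) {x : S}
    (hx : x ∈ clcTop v) : ∀ p, p < x → 0 < v x p := by
  have wf : WellFounded ((· > ·) : S → S → Prop) := wellFounded_gt
  intro p
  refine wf.induction (C := fun p => p < x → 0 < v x p) p ?_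
  intro p IH hp
  obtain ⟨p', hcov, hp'le⟩ := exists_covBy_le_of_lt hp
  have hpos := hx p p' hp hcov
  rcases eq_or_lt_of_le hp'le with rfl | hlt
  · exact hpos
  · have h1 : 0 < v x p' := IH p' hcov.lt hlt
    rw [hclc.2.2.1 p p' x hcov.lt hlt]
    exact lt_min h1 hpos

/-- Part (i): backward score from outside `clcTop` into it vanishes. -/
lemma clc_part_i (hv : IsLlull v) (hclc : CLC v) {x y : S}
    (hx : x ∈ clcTop v) (hy : y ∉ clcTop v) : v y x = 0 := by
  rw [clcTop, Set.mem_setOf_eq] at hy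
  push_neg at hy
  obtain ⟨p, p', hpy, hcov, hle⟩ := hy
  have hzero : v p' p = 0 := le_antisymm hle (llull_nonneg hv hcov.lt.ne')
  have hxp : x ≤ p := by
    by_contra h
    push_neg at h
    exact absurd (hx p p' h hcov) (not_lt.mpr hle)
  have hp'y : p' ≤ y := by
    by_contra h
    push_neg at h
    exact hcov.2 hpy h
  have hxy : x < y := lt_of_le_of_lt hxp hpy
  have step1 : v y p ≤ 0 := by
    rcases eq_or_lt_of_le hp'y with rfl | h
    · exact hzero.le
    · rw [hclc.2.2.1 p p' y hcov.lt h]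
      exact le_trans (min_le_right _ _) hzero.le
  have step2 : v y x ≤ 0 := by
    rcases eq_or_lt_of_le hxp with rfl | h
    · exact step1
    · rw [hclc.2.2.1 x p y h hpy]
      exact le_trans (min_le_left _ _) step1
  exact le_antisymm step2 (llull_nonneg hv hxy.ne')

/-- If the minimum's covering pair is zero, the whole matrix vanishes. -/
lemma clc_all_zero (hv : IsLlull v) (hclc : CLC v) {a : S}
    (ha : ∀ p : S, ¬ p < a) {a1 : S} (hcov : a ⋖ a1)
    (hz1 : v a a1 = 0) (hz2 : v a1 a = 0) :
    ∀ b c : S, b ≠ c → v b c = 0 := by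
  have covzero : ∀ q q' : S, q ⋖ q' → v q q' = 0 ∧ v q' q = 0 := by
    have wf : WellFounded ((· < ·) : S → S → Prop) := wellFounded_lt
    intro q
    refine wf.induction (C := fun q => ∀ q', q ⋖ q' → v q q' = 0 ∧ v q' q = 0) q ?_
    intro q IH q' hq'
    rcases (le_of_not_gt (ha q)).eq_or_lt with rfl | hlt
    · have heq : q' = a1 := by
        rcases lt_trichotomy q' a1 with h | h | h
        · exact absurd h (hcov.2 hq'.lt)
        · exact h
        · exact absurd h (hq'.2 hcov.lt)
      rw [heq]
      exact ⟨hz1, hz2⟩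
    · obtain ⟨p, _, hpq⟩ := exists_le_covBy_of_lt hlt
      obtain ⟨hz1', hz2'⟩ := IH p hpq.lt q hpq
      exact clc_zero_up hv hclc hpq hq' hz1' hz2'
  have fwd : ∀ c b : S, b < c → v b c = 0 := by
    intro c
    have wf : WellFounded ((· > ·) : S → S → Prop) := wellFounded_gt
    intro b
    refine wf.induction (C := fun b => b < c → v b c = 0) b ?_
    intro b IH hbc
    obtain ⟨b1, hcov1, hle⟩ := exists_covBy_le_of_lt hbc
    rcases eq_or_lt_of_le hle with rfl | h
    · exact (covzero b b1 hcov1).1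
    · rw [hclc.2.1 b b1 c hcov1.lt h, (covzero b b1 hcov1).1, IH b1 hcov1.lt h]
      simp
  intro b c hbc
  rcases lt_or_gt_of_ne hbc with h | h
  · exact fwd c b h
  · exact le_antisymm ((hclc.1 c b h).trans (fwd b c h).le) (llull_nonneg hv hbc)

/-- Part (ii): forward scores from a member of `clcTop` are positive. -/
lemma clc_part_ii (hv : IsLlull v) (hclc : CLC v)
    (hnz : ∃ x y : S, x ≠ y ∧ 0 < v x y) {x : S} (hx : x ∈ clcTop v) :
    ∀ y, y ≠ x → 0 < v x y := by
  intro y hy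
  rcases lt_or_gt_of_ne hy with h | h
  · exact clc_top_back_pos hv hclc hx y h
  · by_contra hle
    push_neg at hle
    have hxy0 : v x y = 0 := le_antisymm hle (llull_nonneg hv h.ne)
    obtain ⟨x', hcov, hle'⟩ := exists_covBy_le_of_lt h
    have hm : v x x' = 0 := by
      rcases eq_or_lt_of_le hle' with rfl | h2
      · exact hxy0
      · have hmax := hclc.2.1 x x' y hcov.lt h2
        have hle2 : v x x' ≤ v x y := hmax ▸ le_max_left _ _
        exact le_antisymm (hle2.trans hle) (llull_nonneg hv hcov.lt.ne)
    have hn : v x' x = 0 :=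
      le_antisymm ((hclc.1 x x' hcov.lt).trans hm.le) (llull_nonneg hv hcov.lt.ne')
    by_cases hminx : ∃ p, p < x
    · obtain ⟨p, hp⟩ := hminx
      have h1 := clc_zero_down hv hclc hp hcov hm hn
      exact absurd h1 (clc_top_back_pos hv hclc hx p hp).ne'
    · push_neg at hminx
      obtain ⟨a, b, hab, hpos⟩ := hnz
      exact absurd (clc_all_zero hv hclc (fun p => not_lt.mpr (hminx p)) hcov hm hn a b hab) hpos.ne'

lemma chainMin_le_sup (x y : S) (l : List S) :
    chainMin v x l y ≤ Finset.univ.sup' ⟨x, Finset.mem_univ x⟩ (v x) := by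
  cases l with
  | nil => exact Finset.le_sup' (v x) (Finset.mem_univ y)
  | cons z l => exact le_trans (min_le_left _ _) (Finset.le_sup' (v x) (Finset.mem_univ z))

lemma iScore_bdd (x y : S) : BddAbove {r : ℝ | ∃ l : List S, r = chainMin v x l y} := by
  refine ⟨Finset.univ.sup' ⟨x, Finset.mem_univ x⟩ (v x), ?_⟩
  rintro r ⟨l, rfl⟩
  exact chainMin_le_sup x y l

lemma le_iScore (x y : S) : v x y ≤ iScore v x y :=
  le_csSup (iScore_bdd x y) ⟨[], rfl⟩

lemma chain_nonpos (hv : IsLlull v) (hclc : CLC v) {x : S} (hx : x ∈ clcTop v) :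
    ∀ (l : List S) (z : S), z ∉ clcTop v → chainMin v z l x ≤ 0 := by
  intro l
  induction l with
  | nil => exact fun z hz => (clc_part_i hv hclc hx hz).le
  | cons w l IH =>
    intro z hz
    by_cases hw : w ∈ clcTop v
    · exact le_trans (min_le_left _ _) (clc_part_i hv hclc hw hz).le
    · exact le_trans (min_le_right _ _) (IH w hw)

lemma iScore_zero (hv : IsLlull v) (hclc : CLC v) {x y : S}
    (hx : x ∈ clcTop v) (hy : y ∉ clcTop v) : iScore v y x = 0 := by
  apply le_antisymm
  · refine csSup_le ⟨_, [], rfl⟩ ?_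
    rintro r ⟨l, rfl⟩
    exact chain_nonpos hv hclc hx l y hy
  · exact le_csSup (iScore_bdd y x) ⟨[], (clc_part_i hv hclc hx hy).symm⟩

end Helpers

/-- For a non-vanishing Llull matrix with CLC structure, the set `X = clcTop v`
satisfies (i) `v y x = 0` for `x ∈ X`, `y ∉ X`; (ii) `v x y > 0` for `x ∈ X`,
`y ≠ x`; in particular `X` is the top dominant irreducible component. -/
theorem stmt14 {S : Type*} [LinearOrder S] [Fintype S]
    (v : S → S → ℝ) (hv : IsLlull v) (hclc : CLC v)
    (hnz : ∃ x y : S, x ≠ y ∧ 0 < v x y) :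
    (∀ x ∈ clcTop v, ∀ y ∉ clcTop v, v y x = 0) ∧
    (∀ x ∈ clcTop v, ∀ y : S, y ≠ x → 0 < v x y) ∧
    (∀ x ∈ clcTop v, ∀ y : S,
      (y ∈ clcTop v ↔ (y = x ∨ (0 < iScore v x y ∧ 0 < iScore v y x)))) ∧
    (∀ x ∈ clcTop v, ∀ y ∉ clcTop v, 0 < iScore v x y ∧ iScore v y x = 0) := by
  refine ⟨fun x hx y hy => clc_part_i hv hclc hx hy,
    fun x hx y hy => clc_part_ii hv hclc hnz hx y hy, ?_, ?_⟩
  · intro x hx y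
    constructor
    · intro hyX
      by_cases h : y = x
      · exact Or.inl h
      · exact Or.inr ⟨lt_of_lt_of_le (clc_part_ii hv hclc hnz hx y h) (le_iScore x y),
          lt_of_lt_of_le (clc_part_ii hv hclc hnz hyX x (Ne.symm h)) (le_iScore y x)⟩
    · rintro (rfl | ⟨h1, h2⟩)
      · exact hx
      · by_contra hy
        rw [iScore_zero hv hclc hx hy] at h2
        exact lt_irrefl 0 h2
  · intro x hx y hy
    have hyx : y ≠ x := fun h => hy (h ▸ hx)
    exact ⟨lt_of_lt_of_le (clc_part_ii hv hclc hnz hx y hyx) (le_iScore x y),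
      iScore_zero hv hclc hx hy⟩
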